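/- arXiv:2302.10316 — 5 statements merged into one kernel-verified Lean document; each statement's English description precedes it below -/
import Mathlib

section
/- Let E be a directed graph, V ⊆ E⁰, and H ⊆ E⁰ a hereditary set with V̄ ⊆ H ⊆ R(T(V)). For v ∈ H let P_v(T(V)) be the set of finite paths originating at v and terminating at a vertex of T(V) such that no vertex of the path except its range lies in T(V). Then the following are equivalent: (1) H = V̄; (2) the set H − T(V) contains no infinite emitters, and every infinite path all of whose vertices lie in H contains a vertex of T(V); (3) the set P_v(T(V)) is finite for every v ∈ H. -/
/-- A directed graph: vertices, edges, source and range maps. -/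
structure DGraph where
  V : Type
  Ed : Type
  s : Ed → V
  r : Ed → V

namespace DGraph

variable (E : DGraph)

/-- One-step adjacency: there is an edge from `u` to `v`. -/
def Adj (u v : E.V) : Prop := ∃ e, E.s e = u ∧ E.r e = v

/-- `u ≥ v`: there is a (finite) path from `u` to `v`. -/
def Reaches (u v : E.V) : Prop := Relation.ReflTransGen E.Adj u v

/-- The tree `T(W)` of a set of vertices. -/
def tree (W : Set E.V) : Set E.V := {u | ∃ v ∈ W, E.Reaches v u}

/-- The root `R(W)` of a set of vertices. -/
def root (W : Set E.V) : Set E.V := {u | ∃ v ∈ W, E.Reaches u v}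

/-- The set of edges emitted by `v`. -/
def emits (v : E.V) : Set E.Ed := {e | E.s e = v}

/-- A sink emits no edges. -/
def IsSink (v : E.V) : Prop := E.emits v = ∅

/-- An infinite emitter emits infinitely many edges. -/
def IsInfEmitter (v : E.V) : Prop := (E.emits v).Infinite

/-- A regular vertex is neither a sink nor an infinite emitter. -/
def IsRegular (v : E.V) : Prop := (E.emits v).Nonempty ∧ (E.emits v).Finite

/-- A hereditary set of vertices: `T(H) ⊆ H`. -/
def Hereditary (H : Set E.V) : Prop := ∀ u ∈ H, ∀ v, E.Reaches u v → v ∈ H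

/-- A saturated set of vertices. -/
def Saturated (H : Set E.V) : Prop :=
  ∀ v, E.IsRegular v → (∀ e ∈ E.emits v, E.r e ∈ H) → v ∈ H

/-- The saturated closure of `W`: the smallest hereditary and saturated set containing `W`. -/
def satClosure (W : Set E.V) : Set E.V :=
  ⋂₀ {H : Set E.V | E.Hereditary H ∧ E.Saturated H ∧ W ⊆ H}

/-- `es` is a finite walk (path) starting at `u`; `es = []` is the trivial path at `u`. -/
def IsWalkFrom (u : E.V) (es : List E.Ed) : Prop :=
  es.Chain' (fun e f => E.r e = E.s f) ∧ ∀ e ∈ es.head?, E.s e = u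

/-- The terminal vertex (range) of the walk `es` starting at `u`. -/
def endVert (u : E.V) (es : List E.Ed) : E.V := es.getLast?.elim u E.r

/-- The set of vertices on the walk `es` starting at `u`. -/
def walkVerts (u : E.V) (es : List E.Ed) : Set E.V :=
  insert u {v | ∃ e ∈ es, E.r e = v}

/-- An infinite path. -/
def IsInfPath (f : ℕ → E.Ed) : Prop := ∀ n, E.r (f n) = E.s (f (n + 1))

/-- The set of vertices on an infinite path. -/
def infVerts (f : ℕ → E.Ed) : Set E.V := Set.range fun n => E.s (f n)

/-- Elements of `E^{≤∞}`: finite walks or infinite paths. -/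
inductive GPath (E : DGraph) : Type where
  | fin : E.V → List E.Ed → GPath E
  | inf : (ℕ → E.Ed) → GPath E

/-- Membership in `E^{≤∞}`: a well-formed finite path ending in a sink or an infinite
emitter, or an infinite path. -/
def gmem : GPath E → Prop
  | .fin u es => E.IsWalkFrom u es ∧
      (E.IsSink (E.endVert u es) ∨ E.IsInfEmitter (E.endVert u es))
  | .inf f => E.IsInfPath f

/-- `p⁰`, the vertex set of an element of `E^{≤∞}`. -/
def gverts : GPath E → Set E.V
  | .fin u es => E.walkVerts u es
  | .inf f => E.infVerts f

/-- The graph `E` is cofinal. -/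
def Cofinal : Prop :=
  ∀ v : E.V, ∀ p : GPath E, E.gmem p → ∃ w ∈ E.gverts p, E.Reaches v w

/-- `es` is a cycle based at `u`. -/
def IsCycle (u : E.V) (es : List E.Ed) : Prop :=
  es ≠ [] ∧ E.IsWalkFrom u es ∧ E.endVert u es = u ∧ (es.map E.s).Nodup

/-- The cycle `es` (based at `u`) has an exit. -/
def HasExit (u : E.V) (es : List E.Ed) : Prop :=
  ∃ v ∈ E.walkVerts u es, ∃ e, E.s e = v ∧ e ∉ es

/-- An extreme cycle: a cycle with an exit such that `T(c⁰) ⊆ R(c⁰)`. -/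
def IsExtremeCycle (u : E.V) (es : List E.Ed) : Prop :=
  E.IsCycle u es ∧ E.HasExit u es ∧
    E.tree (E.walkVerts u es) ⊆ E.root (E.walkVerts u es)

/-- `v` lies on some cycle. -/
def OnCycle (v : E.V) : Prop := ∃ u es, E.IsCycle u es ∧ v ∈ E.walkVerts u es

/-- A terminal (infinite) path. -/
def IsTerminalPath (f : ℕ → E.Ed) : Prop :=
  E.IsInfPath f ∧
  (∀ v ∈ E.tree (E.infVerts f), ¬ E.IsInfEmitter v ∧ ¬ E.OnCycle v) ∧
  (∀ g : ℕ → E.Ed, E.IsInfPath g → E.s (g 0) ∈ E.infVerts f →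
      E.tree (E.infVerts g) ⊆ E.root (E.infVerts g))

/-- A terminal vertex: a sink, a vertex on a cycle without exits, a vertex on an
extreme cycle, or a vertex on a terminal path. -/
def IsTerminalVert (v : E.V) : Prop :=
  E.IsSink v ∨
  (∃ u es, E.IsCycle u es ∧ ¬ E.HasExit u es ∧ v ∈ E.walkVerts u es) ∨
  (∃ u es, E.IsExtremeCycle u es ∧ v ∈ E.walkVerts u es) ∨
  (∃ f, E.IsTerminalPath f ∧ v ∈ E.infVerts f)

/-- `p ∼ q` for elements of `E^{≤∞}`: `R(p⁰) = R(q⁰)`. -/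
def pequiv (p q : GPath E) : Prop := E.root (E.gverts p) = E.root (E.gverts q)

/-- `v ≈ w` for terminal vertices. -/
def approx (v w : E.V) : Prop :=
  E.IsTerminalVert v ∧ E.IsTerminalVert w ∧
  ∃ p q : GPath E, E.gmem p ∧ E.gmem q ∧ v ∈ E.gverts p ∧ w ∈ E.gverts q ∧ E.pequiv p q

/-- The cluster of a terminal vertex `v`: its `≈`-equivalence class. -/
def cluster (v : E.V) : Set E.V := {w | E.approx v w}

/-- `C` is a cluster of `E`. -/
def IsCluster (C : Set E.V) : Prop := ∃ v, E.IsTerminalVert v ∧ C = E.cluster v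

/-- `Ter(E)`: the saturated closure of the set of terminal vertices. -/
def Ter : Set E.V := E.satClosure {v | E.IsTerminalVert v}

/-- The set `B_H` of breaking vertices of a (hereditary and saturated) set `H`. -/
def breaking (H : Set E.V) : Set E.V :=
  {v | v ∉ H ∧ E.IsInfEmitter v ∧
    {e | E.s e = v ∧ E.r e ∉ H}.Nonempty ∧ {e | E.s e = v ∧ E.r e ∉ H}.Finite}

/-- `(H, S)` is an admissible pair. -/
def Admissible (H S : Set E.V) : Prop :=
  E.Hereditary H ∧ E.Saturated H ∧ S ⊆ E.breaking H

end DGraph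
namespace DGraph

/-- `P_v(T(W))`: walks originating at `v` and terminating at a vertex of `T(W)`
such that no vertex, except the range, is in `T(W)`. -/
def Pset (E : DGraph) (W : Set E.V) (v : E.V) : Set (List E.Ed) :=
  {es | E.IsWalkFrom v es ∧ E.endVert v es ∈ E.tree W ∧
    ∀ p, p <+: es → p ≠ es → E.endVert v p ∉ E.tree W}

end DGraph

namespace DGraph

variable {E : DGraph} {W H : Set E.V}

/-! ### Walk lemmas -/

theorem isWalkFrom_nil (u : E.V) : E.IsWalkFrom u [] :=
  ⟨List.isChain_nil, by simp⟩

theorem IsWalkFrom.prefix {u : E.V} {es p : List E.Ed} (h : E.IsWalkFrom u es)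
    (hp : p <+: es) : E.IsWalkFrom u p := by
  refine ⟨h.1.prefix hp, ?_⟩
  intro e he
  apply h.2
  obtain ⟨t, rfl⟩ := hp
  cases p with
  | nil => simp at he
  | cons a l => simpa using he

theorem endVert_concat (u : E.V) (es : List E.Ed) (e : E.Ed) :
    E.endVert u (es ++ [e]) = E.r e := by
  simp [DGraph.endVert, List.getLast?_concat]

theorem source_of_walk_append {u : E.V} {p t : List E.Ed} {e : E.Ed}
    (h : E.IsWalkFrom u (p ++ e :: t)) : E.s e = E.endVert u p := by
  obtain ⟨hc, hh⟩ := h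
  rw [List.Chain', List.isChain_append] at hc
  cases hlast : p.getLast? with
  | none =>
    have hp : p = [] := by
      cases p with
      | nil => rfl
      | cons a l => simp [List.getLast?_eq_getLast] at hlast
    subst hp
    have := hh e (by simp)
    simp [DGraph.endVert, this]
  | some x =>
    have hr := hc.2.2 x hlast e (by simp)
    simp [DGraph.endVert, hlast, ← hr]

theorem walk_append_edge {u : E.V} {p : List E.Ed} {e : E.Ed}
    (h : E.IsWalkFrom u p) (he : E.s e = E.endVert u p) :
    E.IsWalkFrom u (p ++ [e]) := by
  refine ⟨?_, ?_⟩
  · rw [List.Chain', List.isChain_append]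
    refine ⟨h.1, List.isChain_singleton e, ?_⟩
    intro x hx y hy
    simp only [List.head?_cons, Option.mem_def, Option.some.injEq] at hy
    subst hy
    rw [he]
    simp [DGraph.endVert, Option.mem_def.mp hx]
  · intro f hf
    cases p with
    | nil =>
      simp only [List.nil_append, List.head?_cons, Option.mem_def, Option.some.injEq] at hf
      subst hf
      simpa [DGraph.endVert] using he
    | cons a l => exact h.2 f (by simpa using hf)

theorem walkFrom_tail {u : E.V} {e : E.Ed} {t : List E.Ed}
    (h : E.IsWalkFrom u (e :: t)) : E.IsWalkFrom (E.r e) t := by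
  obtain ⟨hc, hh⟩ := h
  rw [List.Chain', List.isChain_cons] at hc
  exact ⟨hc.2, fun f hf => (hc.1 f hf).symm⟩

theorem endVert_cons (u : E.V) (e : E.Ed) (t : List E.Ed) :
    E.endVert u (e :: t) = E.endVert (E.r e) t := by
  cases t using List.reverseRecOn with
  | nil => simp [DGraph.endVert]
  | append_singleton l a =>
    show E.endVert u ((e :: l) ++ [a]) = _
    rw [endVert_concat, endVert_concat]

theorem IsWalkFrom.reaches_endVert {u : E.V} {es : List E.Ed}
    (h : E.IsWalkFrom u es) : E.Reaches u (E.endVert u es) := by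
  induction es generalizing u with
  | nil => exact Relation.ReflTransGen.refl
  | cons e t ih =>
    have hs : E.s e = u := h.2 e (by simp)
    rw [endVert_cons]
    exact Relation.ReflTransGen.head ⟨e, hs, rfl⟩ (ih (walkFrom_tail h))

theorem reaches_exists_walk {u v : E.V} (h : E.Reaches u v) :
    ∃ es, E.IsWalkFrom u es ∧ E.endVert u es = v := by
  induction h with
  | refl => exact ⟨[], isWalkFrom_nil u, rfl⟩
  | tail _ hadj ih =>
    obtain ⟨es, hw, he⟩ := ih
    obtain ⟨e, hs, hr⟩ := hadj
    exact ⟨es ++ [e], walk_append_edge hw (hs.trans he.symm), by rw [endVert_concat, hr]⟩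

theorem walk_append {u : E.V} {p q : List E.Ed}
    (hp : E.IsWalkFrom u p) (hq : E.IsWalkFrom (E.endVert u p) q) :
    E.IsWalkFrom u (p ++ q) ∧ E.endVert u (p ++ q) = E.endVert (E.endVert u p) q := by
  induction q using List.reverseRecOn with
  | nil => simpa using ⟨hp, rfl⟩
  | append_singleton l a ih =>
    have hql : E.IsWalkFrom (E.endVert u p) l := hq.prefix (List.prefix_append l [a])
    have hsa : E.s a = E.endVert (E.endVert u p) l := source_of_walk_append hq
    obtain ⟨hw, he⟩ := ih hql
    rw [← List.append_assoc]
    exact ⟨walk_append_edge hw (by rw [hsa, he]), by rw [endVert_concat, endVert_concat]⟩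

/-! ### Pset lemmas -/

theorem exists_prefix_pset_aux : ∀ (n : ℕ) (v : E.V) (es : List E.Ed), es.length ≤ n →
    E.IsWalkFrom v es → E.endVert v es ∈ E.tree W →
    ∃ p, p <+: es ∧ p ∈ E.Pset W v := by
  intro n
  induction n with
  | zero =>
    intro v es hlen hw hend
    have hes : es = [] := List.length_eq_zero_iff.mp (Nat.le_zero.mp hlen)
    subst hes
    refine ⟨[], List.prefix_refl _, hw, hend, ?_⟩
    intro p hp hne
    exact absurd (List.prefix_nil.mp hp) hne
  | succ n ih =>
    intro v es hlen hw hend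
    by_cases hq : ∃ q, q <+: es ∧ q ≠ es ∧ E.endVert v q ∈ E.tree W
    · obtain ⟨q, hq1, hq2, hq3⟩ := hq
      have hlt : q.length < es.length :=
        lt_of_le_of_ne hq1.length_le fun h => hq2 (List.IsPrefix.eq_of_length hq1 h)
      obtain ⟨p, hp1, hp2⟩ := ih v q (by omega) (hw.prefix hq1) hq3
      exact ⟨p, hp1.trans hq1, hp2⟩
    · push_neg at hq
      exact ⟨es, List.prefix_refl _, hw, hend, fun p hp hne => hq p hp hne⟩

theorem exists_pset_of_root {v : E.V} (h : v ∈ E.root (E.tree W)) :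
    ∃ es, es ∈ E.Pset W v := by
  obtain ⟨t, ht, hr⟩ := h
  obtain ⟨es, hw, he⟩ := reaches_exists_walk hr
  obtain ⟨p, _, hp⟩ := exists_prefix_pset_aux es.length v es le_rfl hw (by rw [he]; exact ht)
  exact ⟨p, hp⟩

/-! ### satClosure lemmas -/

theorem satClosure_hereditary : E.Hereditary (E.satClosure W) := by
  intro u hu v huv S hS
  exact hS.1 u (hu S hS) v huv

theorem satClosure_saturated : E.Saturated (E.satClosure W) := by
  intro v hreg hall S hS
  exact hS.2.1 v hreg fun e he => hall e he S hS

theorem subset_satClosure : W ⊆ E.satClosure W := fun _ hw _ hS => hS.2.2 hw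

theorem tree_hereditary : E.Hereditary (E.tree W) := by
  rintro u ⟨w, hw, hr⟩ v huv
  exact ⟨w, hw, hr.trans huv⟩

theorem tree_subset_satClosure : E.tree W ⊆ E.satClosure W := by
  rintro u ⟨w, hw, hr⟩
  exact satClosure_hereditary w (subset_satClosure hw) u hr

/-! ### The approximation filtration -/

def lam (E : DGraph) (W : Set E.V) : ℕ → Set E.V
  | 0 => E.tree W
  | n+1 => lam E W n ∪ {v | E.IsRegular v ∧ ∀ e ∈ E.emits v, E.r e ∈ lam E W n}

theorem lam_hereditary : ∀ n, E.Hereditary (lam E W n)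
  | 0 => tree_hereditary
  | n+1 => by
    intro u hu v huv
    rcases hu with hu | hu
    · exact Or.inl (lam_hereditary n u hu v huv)
    · rcases huv.cases_head with rfl | ⟨c, hc, hcv⟩
      · exact Or.inr hu
      · obtain ⟨e, hs, hr⟩ := hc
        subst hr
        exact Or.inl (lam_hereditary n _ (hu.2 e hs) v hcv)

theorem lam_mono : ∀ {m n : ℕ}, m ≤ n → lam E W m ⊆ lam E W n := by
  intro m n h
  induction h with
  | refl => exact subset_rfl
  | step _ ih => exact ih.trans Set.subset_union_left

theorem satClosure_subset_iUnion_lam : E.satClosure W ⊆ ⋃ n, lam E W n := by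
  apply Set.sInter_subset_of_mem
  refine ⟨?_, ?_, ?_⟩
  · intro u hu v huv
    rw [Set.mem_iUnion] at hu ⊢
    obtain ⟨n, hn⟩ := hu
    exact ⟨n, lam_hereditary n u hn v huv⟩
  · intro v hreg hall
    have hch : ∀ e : E.emits v, ∃ n, E.r e ∈ lam E W n := fun e =>
      Set.mem_iUnion.mp (hall e e.2)
    choose g hg using hch
    have : Finite (E.emits v) := hreg.2.to_subtype
    obtain ⟨N, hN⟩ := Finite.exists_le g
    rw [Set.mem_iUnion]
    exact ⟨N + 1, Or.inr ⟨hreg, fun e he => lam_mono (hN ⟨e, he⟩) (hg ⟨e, he⟩)⟩⟩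
  · intro w hw
    exact Set.mem_iUnion.mpr ⟨0, w, hw, Relation.ReflTransGen.refl⟩

theorem lam_mem_cases : ∀ n, ∀ v ∈ lam E W n, v ∈ E.tree W ∨ E.IsRegular v
  | 0, _, hv => Or.inl hv
  | n+1, v, hv => hv.elim (lam_mem_cases n v) fun h => Or.inr h.1

theorem lam_infpath (f : ℕ → E.Ed) (hf : E.IsInfPath f) :
    ∀ n k, E.s (f k) ∈ lam E W n → ∃ m, E.s (f m) ∈ E.tree W := by
  intro n
  induction n with
  | zero => exact fun k hk => ⟨k, hk⟩
  | succ n ih =>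
    intro k hk
    rcases hk with hk | hk
    · exact ih k hk
    · exact ih (k + 1) (by rw [← hf k]; exact hk.2 (f k) rfl)

end DGraph

/-- Lemma on saturated closures. -/
theorem saturated_closure_tfae (E : DGraph) (W H : Set E.V)
    (hH : E.Hereditary H) (h1 : E.satClosure W ⊆ H) (h2 : H ⊆ E.root (E.tree W)) :
    List.TFAE [
      H = E.satClosure W,
      (∀ v ∈ H \ E.tree W, ¬ E.IsInfEmitter v) ∧
        ∀ f : ℕ → E.Ed, E.IsInfPath f → E.infVerts f ⊆ H → ∃ n, E.s (f n) ∈ E.tree W,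
      ∀ v ∈ H, (E.Pset W v).Finite ] := by
  open DGraph in
  tfae_have 1 → 2 := by
    rintro rfl
    constructor
    · rintro v ⟨hvH, hvT⟩ hinf
      obtain ⟨n, hn⟩ := Set.mem_iUnion.mp (satClosure_subset_iUnion_lam hvH)
      rcases lam_mem_cases n v hn with h | h
      · exact hvT h
      · exact hinf h.2
    · intro f hf hsub
      obtain ⟨n, hn⟩ := Set.mem_iUnion.mp (satClosure_subset_iUnion_lam (hsub ⟨0, rfl⟩))
      exact lam_infpath f hf n 0 hn
  tfae_have 2 → 1 := by
    rintro ⟨h2a, h2b⟩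
    refine Set.Subset.antisymm ?_ h1
    by_contra hns
    rw [Set.not_subset] at hns
    obtain ⟨v0, hv0H, hv0C⟩ := hns
    have key : ∀ u, u ∈ H → u ∉ E.satClosure W →
        ∃ e, E.s e = u ∧ E.r e ∈ H ∧ E.r e ∉ E.satClosure W := by
      intro u huH huC
      have huT : u ∉ E.tree W := fun h => huC (tree_subset_satClosure h)
      obtain ⟨t, ht, hr⟩ := h2 huH
      have hnonempty : (E.emits u).Nonempty := by
        rcases hr.cases_head with rfl | ⟨c, ⟨e, hs, _⟩, _⟩
        · exact absurd ht huT
        · exact ⟨e, hs⟩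
      have hfin : (E.emits u).Finite := Set.not_infinite.mp (h2a u ⟨huH, huT⟩)
      by_contra hno
      push_neg at hno
      refine huC (satClosure_saturated u ⟨hnonempty, hfin⟩ fun e he => ?_)
      exact hno e he (hH u huH _ (Relation.ReflTransGen.single ⟨e, he, rfl⟩))
    have key' : ∀ x : {u : E.V // u ∈ H ∧ u ∉ E.satClosure W},
        ∃ e, E.s e = (x : E.V) ∧ E.r e ∈ H ∧ E.r e ∉ E.satClosure W :=
      fun x => key x x.2.1 x.2.2
    choose nxt hs hrH hrC using key'
    let vs : ℕ → {u : E.V // u ∈ H ∧ u ∉ E.satClosure W} := fun n =>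
      Nat.rec ⟨v0, hv0H, hv0C⟩ (fun _ x => ⟨E.r (nxt x), hrH x, hrC x⟩) n
    have hsf : ∀ n, E.s (nxt (vs n)) = (vs n).1 := fun n => hs (vs n)
    have hpath : E.IsInfPath fun n => nxt (vs n) := by
      intro n
      rw [hsf (n + 1)]
    obtain ⟨m, hm⟩ := h2b _ hpath (by
      rintro x ⟨n, rfl⟩
      show E.s (nxt (vs n)) ∈ H
      rw [hsf]
      exact (vs n).2.1)
    rw [hsf] at hm
    exact (vs m).2.2 (tree_subset_satClosure hm)
  tfae_have 2 → 3 := by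
    rintro ⟨h2a, h2b⟩ v hv
    by_contra hinf
    have hinf' : (E.Pset W v).Infinite := hinf
    set D : List E.Ed → Set (List E.Ed) := fun p => {es ∈ E.Pset W v | p <+: es} with hD
    have hTlem : ∀ p, (D p).Infinite → E.endVert v p ∉ E.tree W := by
      intro p hDp
      obtain ⟨es, hes⟩ := (hDp.diff (Set.finite_singleton p)).nonempty
      have hne : p ≠ es := fun h => hes.2 (h ▸ rfl)
      exact hes.1.1.2.2 p hes.1.2 hne
    have key : ∀ p, E.IsWalkFrom v p → (D p).Infinite →
        ∃ e, E.s e = E.endVert v p ∧ (D (p ++ [e])).Infinite := by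
      intro p hwp hDp
      have hT := hTlem p hDp
      have hH' : E.endVert v p ∈ H := hH v hv _ hwp.reaches_endVert
      have hfin : (E.emits (E.endVert v p)).Finite := Set.not_infinite.mp (h2a _ ⟨hH', hT⟩)
      by_contra hno
      push_neg at hno
      apply hDp
      have hcover : D p ⊆ insert p (⋃ e ∈ E.emits (E.endVert v p), D (p ++ [e])) := by
        rintro es ⟨hes, hpre⟩
        rcases eq_or_ne es p with rfl | hne
        · exact Set.mem_insert _ _
        obtain ⟨t, rfl⟩ := hpre
        cases t with
        | nil => simp at hne
        | cons e t' =>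
          have hse : E.s e = E.endVert v p := source_of_walk_append hes.1
          refine Set.mem_insert_iff.mpr (Or.inr ?_)
          exact Set.mem_biUnion hse ⟨hes, ⟨t', by simp⟩⟩
      exact Set.Finite.subset
        ((hfin.biUnion fun e he => hno e he).insert p) hcover
    have key' : ∀ x : {p : List E.Ed // E.IsWalkFrom v p ∧ (D p).Infinite},
        ∃ e, E.s e = E.endVert v (x : List E.Ed) ∧ (D ((x : List E.Ed) ++ [e])).Infinite :=
      fun x => key x x.2.1 x.2.2
    choose nxt hnxs hnxi using key'
    have hDnil : D [] = E.Pset W v := by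
      ext es
      simp [hD]
    let ps : ℕ → {p : List E.Ed // E.IsWalkFrom v p ∧ (D p).Infinite} := fun n =>
      Nat.rec ⟨[], isWalkFrom_nil v, hDnil ▸ hinf'⟩
        (fun _ x => ⟨(x : List E.Ed) ++ [nxt x], walk_append_edge x.2.1 (hnxs x), hnxi x⟩) n
    have hsf : ∀ n, E.s (nxt (ps n)) = E.endVert v (ps n).1 := fun n => hnxs (ps n)
    have hpath : E.IsInfPath fun n => nxt (ps n) := by
      intro n
      rw [hsf (n + 1)]
      show E.r (nxt (ps n)) = E.endVert v ((ps n).1 ++ [nxt (ps n)])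
      rw [endVert_concat]
    obtain ⟨m, hm⟩ := h2b _ hpath (by
      rintro x ⟨n, rfl⟩
      show E.s (nxt (ps n)) ∈ H
      rw [hsf]
      exact hH v hv _ (ps n).2.1.reaches_endVert)
    rw [hsf] at hm
    exact hTlem (ps m).1 (ps m).2.2 hm
  tfae_have 3 → 2 := by
    intro h3
    constructor
    · rintro v ⟨hvH, hvT⟩ hinf
      have hmk : ∀ e : E.emits v, ∃ es, ((e : E.Ed) :: es) ∈ E.Pset W v := by
        rintro ⟨e, he⟩
        have hrH : E.r e ∈ H := hH v hvH _ (Relation.ReflTransGen.single ⟨e, he, rfl⟩)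
        obtain ⟨es, hw, hend, hmin⟩ := exists_pset_of_root (h2 hrH)
        refine ⟨es, ⟨?_, ?_, ?_⟩⟩
        · refine ⟨List.isChain_cons.mpr ⟨fun y hy => (hw.2 y hy).symm, hw.1⟩, ?_⟩
          intro f hf
          simp only [List.head?_cons, Option.mem_def, Option.some.injEq] at hf
          subst hf
          exact he
        · rw [endVert_cons]
          exact hend
        · intro p hp hne
          cases p with
          | nil => exact hvT
          | cons a q =>
            obtain ⟨rfl, hq⟩ := List.cons_prefix_cons.mp hp
            rw [endVert_cons]
            exact hmin q hq fun h => hne (by rw [h])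
      choose F hF using hmk
      have : Infinite (E.emits v) := Set.infinite_coe_iff.mpr hinf
      refine (Set.infinite_of_injective_forall_mem
        (f := fun e : E.emits v => (e : E.Ed) :: F e) ?_ hF) (h3 v hvH)
      intro a b hab
      exact Subtype.ext (List.cons.injEq _ _ _ _ ▸ hab).1
    · intro f hf hsub
      by_contra hno
      push_neg at hno
      set v := E.s (f 0) with hv
      have hfinP : (E.Pset W v).Finite := h3 v (hsub ⟨0, rfl⟩)
      obtain ⟨N, hN⟩ : ∃ N, ∀ es ∈ E.Pset W v, es.length ≤ N := by
        obtain ⟨N, hN⟩ := (hfinP.image List.length).bddAbove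
        exact ⟨N, fun es hes => hN (Set.mem_image_of_mem _ hes)⟩
      have hpre : ∀ n, E.IsWalkFrom v ((List.range n).map f) ∧
          E.endVert v ((List.range n).map f) = E.s (f n) := by
        intro n
        induction n with
        | zero => exact ⟨isWalkFrom_nil v, rfl⟩
        | succ n ih =>
          rw [List.range_succ, List.map_append]
          exact ⟨walk_append_edge ih.1 ih.2.symm, by rw [List.map_singleton, endVert_concat]; exact hf n⟩
      set p : List E.Ed := (List.range (N + 1)).map f with hp
      have hend : E.endVert v p ∈ H := by
        rw [(hpre (N + 1)).2]
        exact hsub ⟨N + 1, rfl⟩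
      obtain ⟨q, hq⟩ := exists_pset_of_root (h2 hend)
      obtain ⟨hwpq, hepq⟩ := walk_append (hpre (N + 1)).1 hq.1
      obtain ⟨es, hes_pre, hes⟩ := exists_prefix_pset_aux (p ++ q).length v (p ++ q) le_rfl
        hwpq (by rw [hepq]; exact hq.2.1)
      have hlen := hN es hes
      have hplen : p.length = N + 1 := by simp [hp]
      have hlep : es.length ≤ p.length := by omega
      have hesp : es = (List.range es.length).map f := by
        have hh1 : es = (p ++ q).take es.length := List.prefix_iff_eq_take.mp hes_pre
        conv_lhs => rw [hh1, List.take_append_of_le_length hlep, hp, ← List.map_take,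
          List.take_range, Nat.min_eq_left (by omega : es.length ≤ N + 1)]
      have hend2 : E.endVert v es = E.s (f es.length) := by
        conv_lhs => rw [hesp]
        exact (hpre es.length).2
      exact hno es.length (hend2 ▸ hes.2.1)
  tfae_finish
end

section
/- Let R be a (possibly nonunital) associative ring, let J be a two-sided ideal of R which, as a ring, is locally unital, and let I be a two-sided ideal of the ring J. Then I is a two-sided ideal of R. -/
/-- If `R` is a (possibly nonunital) associative ring, `J` is a
two-sided ideal of `R` which is locally unital as a ring, and `I` is a two-sided
ideal of the ring `J`, then `I` is a two-sided ideal of the ring `R`. -/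
theorem ideal_of_locally_unital_ideal_is_ideal
    {R : Type*} [NonUnitalRing R] (J I : Set R)
    -- `J` is a two-sided ideal of `R`:
    (hJ0 : (0 : R) ∈ J) (hJadd : ∀ x ∈ J, ∀ y ∈ J, x + y ∈ J)
    (hJneg : ∀ x ∈ J, -x ∈ J)
    (hJmul : ∀ r : R, ∀ x ∈ J, r * x ∈ J ∧ x * r ∈ J)
    -- `J` is locally unital as a ring:
    (hJlu : ∀ F : Finset R, ↑F ⊆ J →
      ∃ u ∈ J, u * u = u ∧ ∀ x ∈ F, x * u = x ∧ u * x = x)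
    -- `I` is a two-sided ideal of the ring `J`:
    (hIJ : I ⊆ J)
    (hI0 : (0 : R) ∈ I) (hIadd : ∀ x ∈ I, ∀ y ∈ I, x + y ∈ I)
    (hIneg : ∀ x ∈ I, -x ∈ I)
    (hImul : ∀ j ∈ J, ∀ x ∈ I, j * x ∈ I ∧ x * j ∈ I) :
    -- then `I` is a two-sided ideal of `R`:
    ∀ r : R, ∀ x ∈ I, r * x ∈ I ∧ x * r ∈ I := by
  intro r x hx
  obtain ⟨u, huJ, -, hu⟩ := hJlu {x} (by simpa using hIJ hx)
  obtain ⟨hxu, hux⟩ := hu x (Finset.mem_singleton_self x)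
  constructor
  · have : r * x = (r * u) * x := by rw [mul_assoc, hux]
    rw [this]
    exact (hImul _ (hJmul r u huJ).1 x hx).1
  · have : x * r = x * (u * r) := by rw [← mul_assoc, hxu]
    rw [this]
    exact (hImul _ (hJmul r u huJ).2 x hx).2
end

section
/- Let E be a directed graph with E⁰ nonempty. Then E is cofinal if and only if the relation ∼ on E^{≤∞} has exactly one equivalence class, i.e., R(p⁰) = R(q⁰) for all p, q ∈ E^{≤∞}. -/
lemma exists_gpath_root (E : DGraph) (v : E.V) :
    ∃ q : DGraph.GPath E, E.gmem q ∧ v ∈ E.root (E.gverts q) := by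
  classical
  let w : ℕ → E.V := fun n =>
    Nat.rec v (fun _ u => if h : E.IsRegular u then E.r h.1.some else u) n
  have hwsucc : ∀ n, w (n+1) =
      if h : E.IsRegular (w n) then E.r h.1.some else w n := fun n => rfl
  have hreach : ∀ n, E.Reaches v (w n) := by
    intro n
    induction n with
    | zero => exact Relation.ReflTransGen.refl
    | succ n ih =>
      rw [hwsucc]
      split
      · rename_i h
        exact ih.tail ⟨h.1.some, h.1.some_mem, rfl⟩
      · exact ih
  by_cases hall : ∀ n, E.IsRegular (w n)
  · refine ⟨.inf (fun n => (hall n).1.some), ?_, ?_⟩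
    · intro n
      have h1 : E.r (hall n).1.some = w (n+1) := by
        rw [hwsucc, dif_pos (hall n)]
      have h2 : E.s (hall (n+1)).1.some = w (n+1) := (hall (n+1)).1.some_mem
      rw [h1, h2]
    · exact ⟨E.s ((hall 0).1.some), ⟨0, rfl⟩, by
        have : E.s ((hall 0).1.some) = w 0 := (hall 0).1.some_mem
        rw [this]
        exact hreach 0⟩
  · push_neg at hall
    obtain ⟨n, hn⟩ := hall
    refine ⟨.fin (w n) [], ⟨⟨List.isChain_nil, by simp⟩, ?_⟩,
      ⟨w n, Set.mem_insert _ _, hreach n⟩⟩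
    have hend : E.endVert (w n) [] = w n := rfl
    rw [hend]
    rw [DGraph.IsRegular, not_and_or] at hn
    rcases hn with hn | hn
    · left
      exact Set.not_nonempty_iff_eq_empty.mp hn
    · right
      exact hn

/-- Corollary: a graph with nonempty vertex set is cofinal if and
only if the relation `∼` on `E^{≤∞}` has exactly one equivalence class, i.e.,
`R(p⁰) = R(q⁰)` for all `p, q ∈ E^{≤∞}`. -/
theorem cofinal_iff_one_class (E : DGraph) (hne : Nonempty E.V) :
    E.Cofinal ↔
      ∀ p q : DGraph.GPath E, E.gmem p → E.gmem q →
        E.root (E.gverts p) = E.root (E.gverts q) := by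
  constructor
  · intro hc p q hp hq
    ext x
    constructor
    · intro _
      obtain ⟨w, hw, hr⟩ := hc x q hq
      exact ⟨w, hw, hr⟩
    · intro _
      obtain ⟨w, hw, hr⟩ := hc x p hp
      exact ⟨w, hw, hr⟩
  · intro h v p hp
    obtain ⟨q, hq, hv⟩ := exists_gpath_root E v
    rw [h q p hq hp] at hv
    exact hv
end

section
/- Let E be a directed graph and α a terminal path of E. Then every infinite path β originating at a vertex of α (i.e., with s(β) ∈ α⁰) is terminal and satisfies R(α⁰) = R(β⁰). -/
namespace MyAux

open DGraph

variable {E : DGraph}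

lemma reaches_along {g : ℕ → E.Ed} (hg : E.IsInfPath g) {i j : ℕ} (hij : i ≤ j) :
    E.Reaches (E.s (g i)) (E.s (g j)) := by
  induction j, hij using Nat.le_induction with
  | base => exact Relation.ReflTransGen.refl
  | succ j hij ih => exact ih.tail ⟨g j, rfl, hg j⟩

lemma reaches_root {W : Set E.V} {u v : E.V} (h : E.Reaches u v) (hv : v ∈ E.root W) :
    u ∈ E.root W := by
  obtain ⟨w, hw, hvw⟩ := hv
  exact ⟨w, hw, h.trans hvw⟩

/-- Concatenation of the first `m` edges of `g` with `h`. -/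
def cat (g h : ℕ → E.Ed) (m : ℕ) : ℕ → E.Ed :=
  fun n => if n < m then g n else h (n - m)

lemma cat_isInfPath {g h : ℕ → E.Ed} (hg : E.IsInfPath g) (hh : E.IsInfPath h)
    {m : ℕ} (hs : E.s (g m) = E.s (h 0)) : E.IsInfPath (cat g h m) := by
  intro n
  unfold cat
  by_cases h1 : n + 1 < m
  · simp only [if_pos (by omega : n < m), if_pos h1]; exact hg n
  · by_cases h2 : n < m
    · have hm : n + 1 = m := by omega
      simp only [if_pos h2, if_neg h1]
      rw [show n + 1 - m = 0 by omega, ← hs, ← hm]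
      exact hg n
    · simp only [if_neg h1, if_neg h2]
      rw [show n + 1 - m = (n - m) + 1 by omega]
      exact hh (n - m)

lemma cat_source_zero {g h : ℕ → E.Ed} {m : ℕ} (hs : E.s (g m) = E.s (h 0)) :
    E.s (cat g h m 0) = E.s (g 0) := by
  unfold cat
  by_cases hm : 0 < m
  · rw [if_pos hm]
  · rw [if_neg hm, Nat.zero_sub m, ← hs,
      show m = 0 by omega]

lemma mem_cat {g h : ℕ → E.Ed} {m : ℕ} :
    E.infVerts h ⊆ E.infVerts (cat g h m) := by
  rintro v ⟨k, rfl⟩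
  refine ⟨k + m, ?_⟩
  simp only [cat, if_neg (by omega : ¬ k + m < m), Nat.add_sub_cancel]

lemma cat_sub_root {g h : ℕ → E.Ed} (hg : E.IsInfPath g) {m : ℕ}
    (hs : E.s (g m) = E.s (h 0)) :
    E.infVerts (cat g h m) ⊆ E.root (E.infVerts h) := by
  rintro v ⟨n, rfl⟩
  by_cases hn : n < m
  · simp only [cat, if_pos hn]
    exact ⟨E.s (h 0), ⟨0, rfl⟩, hs ▸ reaches_along hg (le_of_lt hn)⟩
  · simp only [cat, if_neg hn]
    exact ⟨E.s (h (n - m)), ⟨n - m, rfl⟩, Relation.ReflTransGen.refl⟩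

end MyAux

/-- Lemma, part 1: every infinite path originating at a vertex of a
terminal path `α` is terminal, and `R(α⁰) = R(β⁰)`. -/
theorem infPath_from_terminal_is_terminal (E : DGraph) (f : ℕ → E.Ed)
    (hf : E.IsTerminalPath f) (g : ℕ → E.Ed) (hg : E.IsInfPath g)
    (h0 : E.s (g 0) ∈ E.infVerts f) :
    E.IsTerminalPath g ∧ E.root (E.infVerts f) = E.root (E.infVerts g) := by
  open MyAux in
  obtain ⟨n0, hn0⟩ := h0
  -- every vertex of g is in the tree of f
  have hgT : E.infVerts g ⊆ E.tree (E.infVerts f) := by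
    rintro v ⟨k, rfl⟩
    refine ⟨E.s (f n0), ⟨n0, rfl⟩, ?_⟩
    have := reaches_along hg (Nat.zero_le k)
    rwa [← hn0] at this
  have hTgTf : E.tree (E.infVerts g) ⊆ E.tree (E.infVerts f) := by
    rintro u ⟨v, hv, hvu⟩
    obtain ⟨w, hw, hwv⟩ := hgT hv
    exact ⟨w, hw, hwv.trans hvu⟩
  -- condition 3 for g
  have hcond3 : ∀ h : ℕ → E.Ed, E.IsInfPath h → E.s (h 0) ∈ E.infVerts g →
      E.tree (E.infVerts h) ⊆ E.root (E.infVerts h) := by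
    intro h hh hsh
    obtain ⟨m, hm⟩ := hsh
    have hcat := cat_isInfPath hg hh hm
    have hcat0 : E.s (cat g h m 0) ∈ E.infVerts f :=
      ⟨n0, by rw [cat_source_zero hm, hn0]⟩
    have hroot := hf.2.2 (cat g h m) hcat hcat0
    intro u hu
    obtain ⟨v, hv, hvu⟩ := hu
    have : u ∈ E.tree (E.infVerts (cat g h m)) := ⟨v, mem_cat hv, hvu⟩
    obtain ⟨w, hw, huw⟩ := hroot this
    obtain ⟨x, hx, hwx⟩ := cat_sub_root hg hm hw
    exact ⟨x, hx, huw.trans hwx⟩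
  -- T(f⁰) ⊆ R(f⁰)
  have hTfRf : E.tree (E.infVerts f) ⊆ E.root (E.infVerts f) :=
    hf.2.2 f hf.1 ⟨0, rfl⟩
  -- T(g⁰) ⊆ R(g⁰) by f's condition applied to g
  have hTgRg : E.tree (E.infVerts g) ⊆ E.root (E.infVerts g) :=
    hf.2.2 g hg ⟨n0, hn0⟩
  refine ⟨⟨hg, fun v hv => hf.2.1 v (hTgTf hv), hcond3⟩, Set.Subset.antisymm ?_ ?_⟩
  · -- R(f⁰) ⊆ R(g⁰)
    rintro u ⟨v, ⟨n, rfl⟩, huv⟩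
    rcases le_total n n0 with hle | hle
    · exact reaches_root huv ⟨E.s (g 0), ⟨0, rfl⟩, hn0 ▸ reaches_along hf.1 hle⟩
    · have : E.s (f n) ∈ E.tree (E.infVerts g) :=
        ⟨E.s (g 0), ⟨0, rfl⟩, hn0 ▸ reaches_along hf.1 hle⟩
      exact reaches_root huv (hTgRg this)
  · -- R(g⁰) ⊆ R(f⁰)
    rintro u ⟨v, hv, huv⟩
    exact reaches_root huv (hTfRf (hgT hv))
end

section
/- Let E be a directed graph and α a terminal path of E. If β is an infinite path which contains a vertex v of α, then the suffix γ of β starting at v is terminal and R(α⁰) = R(β⁰) = R(γ⁰). -/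
namespace DGraph

theorem reaches_along (E : DGraph) {p : ℕ → E.Ed} (hp : E.IsInfPath p) :
    ∀ {i j : ℕ}, i ≤ j → E.Reaches (E.s (p i)) (E.s (p j)) := by
  intro i j hij
  induction j, hij using Nat.le_induction with
  | base => exact Relation.ReflTransGen.refl
  | succ j hij ih => exact ih.tail ⟨p j, rfl, hp j⟩

theorem root_trans (E : DGraph) {W W' : Set E.V} (h : W ⊆ E.root W') :
    E.root W ⊆ E.root W' := by
  rintro u ⟨w, hw, huw⟩
  obtain ⟨w', hw', hww'⟩ := h hw
  exact ⟨w', hw', huw.trans hww'⟩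

end DGraph

/-- Lemma, part 2: if an infinite path `β` contains a vertex `v` of a
terminal path `α`, then the suffix `γ` of `β` starting at `v` is terminal and
`R(α⁰) = R(β⁰) = R(γ⁰)`. -/
theorem suffix_at_vertex_of_terminal (E : DGraph) (f : ℕ → E.Ed)
    (hf : E.IsTerminalPath f) (g : ℕ → E.Ed) (hg : E.IsInfPath g)
    (v : E.V) (hv : v ∈ E.infVerts f) (k : ℕ) (hk : E.s (g k) = v) :
    E.IsTerminalPath (fun n => g (n + k)) ∧
    E.root (E.infVerts f) = E.root (E.infVerts g) ∧
    E.root (E.infVerts g) = E.root (E.infVerts (fun n => g (n + k))) := by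

  obtain ⟨i, hi⟩ := hv
  set γ : ℕ → E.Ed := fun n => g (n + k) with hγ
  have hγp : E.IsInfPath γ := by
    intro n
    show E.r (g (n + k)) = E.s (g (n + 1 + k))
    rw [Nat.add_right_comm]
    exact hg (n + k)
  have hγ0 : E.s (γ 0) = v := by
    show E.s (g (0 + k)) = v
    rw [Nat.zero_add]; exact hk
  have hvf : v ∈ E.infVerts f := ⟨i, hi⟩
  have hγ0f : E.s (γ 0) ∈ E.infVerts f := by rw [hγ0]; exact hvf
  have hTγ : E.tree (E.infVerts γ) ⊆ E.root (E.infVerts γ) :=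
    hf.2.2 γ hγp hγ0f
  have hγT : E.infVerts γ ⊆ E.tree (E.infVerts f) := by
    rintro u ⟨n, rfl⟩
    exact ⟨E.s (γ 0), hγ0f, E.reaches_along hγp (Nat.zero_le n)⟩
  have hterm : E.IsTerminalPath γ := by
    refine ⟨hγp, ?_, ?_⟩
    · intro u hu
      apply hf.2.1
      obtain ⟨w, hw, hwu⟩ := hu
      obtain ⟨w', hw', hww'⟩ := hγT hw
      exact ⟨w', hw', hww'.trans hwu⟩
    · intro h hh hh0
      obtain ⟨m, hm⟩ := hh0
      set h' : ℕ → E.Ed := fun n => if n < m then γ n else h (n - m) with hh'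
      have hh'p : E.IsInfPath h' := by
        intro n
        by_cases h1 : n + 1 < m
        · have h2 : n < m := by omega
          simp only [hh', if_pos h1, if_pos h2]
          exact hγp n
        · by_cases h2 : n < m
          · have hm' : n + 1 = m := by omega
            simp only [hh', if_pos h2, if_neg h1]
            rw [hm', Nat.sub_self, ← hm, ← hm']
            exact hγp n
          · simp only [hh', if_neg h1, if_neg h2]
            rw [show n + 1 - m = n - m + 1 by omega]
            exact hh (n - m)
      have hh'0 : E.s (h' 0) ∈ E.infVerts f := by
        rcases Nat.eq_zero_or_pos m with h0 | h0
        · simp only [hh', if_neg (show ¬ (0:ℕ) < m by omega)]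
          rw [show (0:ℕ) - m = 0 by omega, ← hm, h0]
          exact hγ0f
        · simp only [hh', if_pos h0]
          exact hγ0f
      have hT := hf.2.2 h' hh'p hh'0
      intro u hu
      have huh' : u ∈ E.tree (E.infVerts h') := by
        obtain ⟨w, ⟨n, rfl⟩, hwu⟩ := hu
        refine ⟨E.s (h' (n + m)), ⟨n + m, rfl⟩, ?_⟩
        simp only [hh']
        rw [if_neg (show ¬ n + m < m by omega), Nat.add_sub_cancel]
        exact hwu
      obtain ⟨w, ⟨j, hj⟩, huw⟩ := hT huh'
      by_cases hjm : j < m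
      · have hr : E.Reaches w (E.s (h 0)) := by
          rw [← hj, ← hm]
          simp only [hh', if_pos hjm]
          exact E.reaches_along hγp (le_of_lt hjm)
        exact ⟨E.s (h 0), ⟨0, rfl⟩, huw.trans hr⟩
      · refine ⟨w, ⟨j - m, ?_⟩, huw⟩
        rw [← hj]
        simp only [hh', if_neg hjm]
  have hTf : E.tree (E.infVerts f) ⊆ E.root (E.infVerts f) :=
    hf.2.2 f hf.1 ⟨0, rfl⟩
  have hfγ : E.root (E.infVerts f) = E.root (E.infVerts γ) := by
    apply Set.Subset.antisymm
    · apply E.root_trans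
      rintro u ⟨j, rfl⟩
      have h1 : E.Reaches (E.s (f j)) (E.s (f (max i j))) :=
        E.reaches_along hf.1 (le_max_right i j)
      have h2 : E.s (f (max i j)) ∈ E.tree (E.infVerts γ) := by
        refine ⟨E.s (γ 0), ⟨0, rfl⟩, ?_⟩
        rw [hγ0, ← hi]
        exact E.reaches_along hf.1 (le_max_left i j)
      obtain ⟨w, hw, hww⟩ := hTγ h2
      exact ⟨w, hw, h1.trans hww⟩
    · apply E.root_trans
      rintro u ⟨n, rfl⟩
      exact hTf (hγT ⟨n, rfl⟩)
  have hgγ : E.root (E.infVerts g) = E.root (E.infVerts γ) := by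
    apply Set.Subset.antisymm
    · apply E.root_trans
      rintro u ⟨j, rfl⟩
      refine ⟨E.s (γ (max j k - k)), ⟨max j k - k, rfl⟩, ?_⟩
      show E.Reaches (E.s (g j)) (E.s (g (max j k - k + k)))
      rw [Nat.sub_add_cancel (le_max_right j k)]
      exact E.reaches_along hg (le_max_left j k)
    · apply E.root_trans
      rintro u ⟨n, rfl⟩
      exact ⟨E.s (g (n + k)), ⟨n + k, rfl⟩, Relation.ReflTransGen.refl⟩
  exact ⟨hterm, hfγ.trans hgγ.symm, hgγ⟩
end
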